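/- (Contractive intertwiner) Let φ, ψ be α-completely positive with ψ ≤_u φ (λφ − ψ α-completely positive for some λ > 0), with minimal Stinespring constructions (π_φ, (H_φ, J_φ), V_φ) and (π_ψ, (H_ψ, J_ψ), V_ψ). Then there exists a bounded linear operator S : H_φ → H_ψ with ‖S‖² ≤ λ such that S(π_φ(g)V_φξ) = π_ψ(g)V_ψξ for all g ∈ G, ξ ∈ H; moreover S π_φ(g) = π_ψ(g) S for all g, S V_φ = V_ψ, and S J_φ = J_ψ S. -/

import Mathlib

open scoped ComplexOrder

noncomputable section

def IsInvolution (G : Type*) [Group G] (α : G → G) : Prop :=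
  (∀ g, α (α g) = g) ∧ α 1 = 1 ∧ ∀ g : G, α g⁻¹ = (α g)⁻¹

def IsAlphaCP {G : Type*} [Group G] (α : G → G)
    {H : Type*} [NormedAddCommGroup H] [InnerProductSpace ℂ H] [CompleteSpace H]
    (φ : G → H →L[ℂ] H) : Prop :=
  (∀ g₁ g₂ : G, φ (α g₁ * α g₂) = φ (α (g₁ * g₂)) ∧ φ (α (g₁ * g₂)) = φ (g₁ * g₂)) ∧
  (∀ (n : ℕ) (g : Fin n → G) (ξ : Fin n → H),
    0 ≤ ∑ i, ∑ j, (inner ℂ (φ ((α (g i))⁻¹ * g j) (ξ j)) (ξ i) : ℂ)) ∧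
  (∃ K > (0 : ℝ), ∀ (n : ℕ) (g : Fin n → G) (ξ : Fin n → H),
    ∑ i, ∑ j, (inner ℂ (((ContinuousLinearMap.adjoint (φ (g i))) ∘L φ (g j)) (ξ j)) (ξ i) : ℂ) ≤
      (K : ℂ) * ∑ i, ∑ j, (inner ℂ (φ ((α (g i))⁻¹ * g j) (ξ j)) (ξ i) : ℂ)) ∧
  (∀ g : G, ∃ M > (0 : ℝ), ∀ (n : ℕ) (gs : Fin n → G) (ξ : Fin n → H),
    ∑ i, ∑ j, (inner ℂ (φ ((α (g * gs i))⁻¹ * (g * gs j)) (ξ j)) (ξ i) : ℂ) ≤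
      (M : ℂ) * ∑ i, ∑ j, (inner ℂ (φ ((α (gs i))⁻¹ * gs j) (ξ j)) (ξ i) : ℂ))

structure KreinDilation (G : Type*) [Group G] (α : G → G)
    (H : Type*) [NormedAddCommGroup H] [InnerProductSpace ℂ H] [CompleteSpace H]
    (φ : G → H →L[ℂ] H) where
  K : Type
  [nK : NormedAddCommGroup K]
  [iK : InnerProductSpace ℂ K]
  [cK : CompleteSpace K]
  J : K →L[ℂ] K
  rep : G → K →L[ℂ] K
  V : H →L[ℂ] K
  J_sa : ContinuousLinearMap.adjoint J = J
  J_inv : J ∘L J = 1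
  rep_one : rep 1 = 1
  rep_mul : ∀ g g', rep (g * g') = rep g ∘L rep g'
  rep_inv : ∀ g, rep g⁻¹ = J ∘L (ContinuousLinearMap.adjoint (rep g)) ∘L J
  eq : ∀ g, φ g = (ContinuousLinearMap.adjoint V) ∘L rep g ∘L V
  minimal : (Submodule.span ℂ {x : K | ∃ g ξ, x = rep g (V ξ)}).topologicalClosure = ⊤
  commJ : ∀ g, J ∘L rep g ∘L V = rep (α g) ∘L V

attribute [instance] KreinDilation.nK KreinDilation.iK KreinDilation.cK

section Aux

open ContinuousLinearMap

variable {G : Type*} [Group G] {α : G → G}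
  {H : Type*} [NormedAddCommGroup H] [InnerProductSpace ℂ H] [CompleteSpace H]
  {φ : G → H →L[ℂ] H}

lemma aux_JV (hα : IsInvolution G α) (D : KreinDilation G α H φ) (ξ : H) :
    D.J (D.V ξ) = D.V ξ := by
  have h := congrArg (fun T : H →L[ℂ] D.K => T ξ) (D.commJ 1)
  simpa [D.rep_one, hα.2.1] using h

lemma aux_inner_gen (hα : IsInvolution G α) (D : KreinDilation G α H φ)
    (g g' : G) (ξ ξ' : H) :
    (inner ℂ (D.rep g' (D.V ξ')) (D.rep g (D.V ξ)) : ℂ)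
      = inner ℂ (φ ((α g)⁻¹ * g') ξ') ξ := by
  have hadj : ContinuousLinearMap.adjoint (D.rep ((α g)⁻¹)) (D.V ξ) = D.rep g (D.V ξ) := by
    have h1 : ContinuousLinearMap.adjoint (D.rep ((α g)⁻¹))
        = D.J ∘L (D.rep (α g) ∘L D.J) := by
      rw [D.rep_inv (α g), adjoint_comp, adjoint_comp, adjoint_adjoint, D.J_sa]
      ext x; simp [comp_apply]
    have h2 := congrArg (fun T : H →L[ℂ] D.K => T ξ) (D.commJ (α g))
    simp only [comp_apply, coe_comp', Function.comp_apply] at h1 h2 ⊢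
    rw [h1]
    simp only [comp_apply, coe_comp', Function.comp_apply]
    rw [aux_JV hα D ξ, h2, hα.1 g]
  calc (inner ℂ (D.rep g' (D.V ξ')) (D.rep g (D.V ξ)) : ℂ)
      = inner ℂ (D.rep g' (D.V ξ')) (ContinuousLinearMap.adjoint (D.rep ((α g)⁻¹)) (D.V ξ)) := by
        rw [hadj]
    _ = inner ℂ (D.rep ((α g)⁻¹) (D.rep g' (D.V ξ'))) (D.V ξ) := adjoint_inner_right _ _ _
    _ = inner ℂ (D.rep ((α g)⁻¹ * g') (D.V ξ')) (D.V ξ) := by rw [D.rep_mul]; rfl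
    _ = inner ℂ (φ ((α g)⁻¹ * g') ξ') ξ := by
        rw [D.eq ((α g)⁻¹ * g')]
        simp [comp_apply, adjoint_inner_left]

lemma aux_sum_inner (hα : IsInvolution G α) (D : KreinDilation G α H φ) (f : G →₀ H) :
    (inner ℂ ((Finsupp.lsum ℂ (fun g => ((D.rep g).comp D.V).toLinearMap)) f)
        ((Finsupp.lsum ℂ (fun g => ((D.rep g).comp D.V).toLinearMap)) f) : ℂ)
      = ∑ i ∈ f.support, ∑ j ∈ f.support, (inner ℂ (φ ((α i)⁻¹ * j) (f j)) (f i) : ℂ) := by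
  rw [Finsupp.lsum_apply, Finsupp.sum, inner_sum]
  refine Finset.sum_congr rfl fun i _ => ?_
  rw [sum_inner]
  refine Finset.sum_congr rfl fun j _ => ?_
  exact aux_inner_gen hα D i j (f i) (f j)

omit [CompleteSpace H] in
lemma aux_pos_finset {Θ : G → H →L[ℂ] H}
    (hp : ∀ (n : ℕ) (g : Fin n → G) (ξ : Fin n → H),
      0 ≤ ∑ i, ∑ j, (inner ℂ (Θ ((α (g i))⁻¹ * g j) (ξ j)) (ξ i) : ℂ))
    {ι : Type*} (s : Finset ι) (g : ι → G) (ξ : ι → H) :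
    0 ≤ ∑ i ∈ s, ∑ j ∈ s, (inner ℂ (Θ ((α (g i))⁻¹ * g j) (ξ j)) (ξ i) : ℂ) := by
  classical
  have h := hp (Fintype.card s) (fun k => g ((Fintype.equivFin s).symm k))
    (fun k => ξ ((Fintype.equivFin s).symm k))
  calc (0 : ℂ) ≤ ∑ i, ∑ j, (inner ℂ (Θ ((α (g ((Fintype.equivFin s).symm i)))⁻¹ *
        g ((Fintype.equivFin s).symm j)) (ξ ((Fintype.equivFin s).symm j)))
        (ξ ((Fintype.equivFin s).symm i)) : ℂ) := h
    _ = ∑ i : s, ∑ j : s, (inner ℂ (Θ ((α (g i))⁻¹ * g j) (ξ j)) (ξ i) : ℂ) := by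
        refine Fintype.sum_equiv (Fintype.equivFin s).symm _ _ fun i => ?_
        exact Fintype.sum_equiv (Fintype.equivFin s).symm _ _ fun j => rfl
    _ = ∑ i ∈ s, ∑ j ∈ s, (inner ℂ (Θ ((α (g i))⁻¹ * g j) (ξ j)) (ξ i) : ℂ) := by
        rw [← Finset.sum_coe_sort s]
        refine Finset.sum_congr rfl fun i _ => ?_
        rw [← Finset.sum_coe_sort s]

end Aux

set_option maxHeartbeats 1000000 in
open ContinuousLinearMap in
theorem contractive_intertwiner {G : Type*} [Group G] (α : G → G)
    {H : Type*} [NormedAddCommGroup H] [InnerProductSpace ℂ H] [CompleteSpace H]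
    (φ ψ : G → H →L[ℂ] H) (hα : IsInvolution G α)
    (hφ : IsAlphaCP α φ) (hψ : IsAlphaCP α ψ)
    (Dφ : KreinDilation G α H φ) (Dψ : KreinDilation G α H ψ)
    (l : ℝ) (hl : 0 < l) (hdom : IsAlphaCP α (fun g => (l : ℂ) • φ g - ψ g)) :
    ∃ S : Dφ.K →L[ℂ] Dψ.K,
      ‖S‖ ^ 2 ≤ l ∧
      (∀ (g : G) (ξ : H), S (Dφ.rep g (Dφ.V ξ)) = Dψ.rep g (Dψ.V ξ)) ∧
      (∀ g : G, S ∘L Dφ.rep g = Dψ.rep g ∘L S) ∧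
      S ∘L Dφ.V = Dψ.V ∧
      S ∘L Dφ.J = Dψ.J ∘L S := by
  classical
  set Aφ : (G →₀ H) →ₗ[ℂ] Dφ.K :=
    Finsupp.lsum ℂ (fun g => ((Dφ.rep g).comp Dφ.V).toLinearMap) with hAφ
  set Aψ : (G →₀ H) →ₗ[ℂ] Dψ.K :=
    Finsupp.lsum ℂ (fun g => ((Dψ.rep g).comp Dψ.V).toLinearMap) with hAψ
  -- key inequality
  have key : ∀ f : G →₀ H, ‖Aψ f‖ ≤ Real.sqrt l * ‖Aφ f‖ := by
    intro f
    have hposC := aux_pos_finset (α := α) (Θ := fun g => (l : ℂ) • φ g - ψ g)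
      hdom.2.1 f.support id f
    have hsplit : ∑ i ∈ f.support, ∑ j ∈ f.support,
        (inner ℂ ((fun g => (l : ℂ) • φ g - ψ g) ((α (id i))⁻¹ * id j) (f j)) (f i) : ℂ)
        = (l : ℂ) * (∑ i ∈ f.support, ∑ j ∈ f.support,
            (inner ℂ (φ ((α i)⁻¹ * j) (f j)) (f i) : ℂ))
          - ∑ i ∈ f.support, ∑ j ∈ f.support, (inner ℂ (ψ ((α i)⁻¹ * j) (f j)) (f i) : ℂ) := by
      simp only [id_eq, ContinuousLinearMap.sub_apply, ContinuousLinearMap.smul_apply,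
        inner_sub_left, inner_smul_left, Complex.conj_ofReal, Finset.sum_sub_distrib,
        Finset.mul_sum]
    rw [hsplit] at hposC
    have hle : ∑ i ∈ f.support, ∑ j ∈ f.support, (inner ℂ (ψ ((α i)⁻¹ * j) (f j)) (f i) : ℂ)
        ≤ (l : ℂ) * ∑ i ∈ f.support, ∑ j ∈ f.support,
            (inner ℂ (φ ((α i)⁻¹ * j) (f j)) (f i) : ℂ) := sub_nonneg.mp hposC
    rw [← aux_sum_inner hα Dφ f, ← aux_sum_inner hα Dψ f,
      inner_self_eq_norm_sq_to_K, inner_self_eq_norm_sq_to_K, ← hAφ, ← hAψ] at hle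
    have hleR : ‖Aψ f‖ ^ 2 ≤ l * ‖Aφ f‖ ^ 2 := by
      have : ((‖Aψ f‖ ^ 2 : ℝ) : ℂ) ≤ ((l * ‖Aφ f‖ ^ 2 : ℝ) : ℂ) := by push_cast; exact hle
      exact Complex.real_le_real.mp this
    have h1 : ‖Aψ f‖ = Real.sqrt (‖Aψ f‖ ^ 2) := (Real.sqrt_sq (norm_nonneg _)).symm
    rw [h1]
    calc Real.sqrt (‖Aψ f‖ ^ 2) ≤ Real.sqrt (l * ‖Aφ f‖ ^ 2) := Real.sqrt_le_sqrt hleR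
      _ = Real.sqrt l * ‖Aφ f‖ := by
          rw [Real.sqrt_mul hl.le, Real.sqrt_sq (norm_nonneg _)]
  -- kernel inclusion and the map on the range
  have hker : LinearMap.ker Aφ ≤ LinearMap.ker Aψ := by
    intro f hf
    rw [LinearMap.mem_ker] at hf ⊢
    have := key f
    rw [hf, norm_zero, mul_zero] at this
    exact norm_le_zero_iff.mp this
  set S₀ : LinearMap.range Aφ →ₗ[ℂ] Dψ.K :=
    ((LinearMap.ker Aφ).liftQ Aψ hker).comp Aφ.quotKerEquivRange.symm.toLinearMap with hS₀
  have hS₀val : ∀ (f : G →₀ H) (h : Aφ f ∈ LinearMap.range Aφ),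
      S₀ ⟨Aφ f, h⟩ = Aψ f := by
    intro f h
    rw [hS₀]
    simp only [LinearMap.coe_comp, Function.comp_apply, LinearEquiv.coe_coe]
    rw [LinearMap.quotKerEquivRange_symm_apply_image]
    exact (LinearMap.ker Aφ).liftQ_apply Aψ f
  have hS₀bound : ∀ x : LinearMap.range Aφ, ‖S₀ x‖ ≤ Real.sqrt l * ‖x‖ := by
    rintro ⟨x, f, rfl⟩
    rw [hS₀val f ⟨f, rfl⟩]
    simpa using key f
  set S₁ : LinearMap.range Aφ →L[ℂ] Dψ.K := S₀.mkContinuous (Real.sqrt l) hS₀bound with hS₁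
  -- density
  have hrange : LinearMap.range Aφ
      = Submodule.span ℂ {x : Dφ.K | ∃ g ξ, x = Dφ.rep g (Dφ.V ξ)} := by
    apply le_antisymm
    · rintro x ⟨f, rfl⟩
      rw [hAφ, Finsupp.lsum_apply]
      refine Submodule.sum_mem _ fun g _ => Submodule.subset_span ?_
      exact ⟨g, f g, rfl⟩
    · rw [Submodule.span_le]
      rintro x ⟨g, ξ, rfl⟩
      exact ⟨Finsupp.single g ξ, by rw [hAφ, Finsupp.lsum_single]; rfl⟩
  have hdense : Dense ((LinearMap.range Aφ : Submodule ℂ Dφ.K) : Set Dφ.K) := by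
    rw [hrange]
    exact Submodule.dense_iff_topologicalClosure_eq_top.mpr Dφ.minimal
  have hdr : DenseRange ((LinearMap.range Aφ).subtypeL) := by
    have : Set.range ((LinearMap.range Aφ).subtypeL)
        = ((LinearMap.range Aφ : Submodule ℂ Dφ.K) : Set Dφ.K) := Subtype.range_coe
    rw [DenseRange, this]; exact hdense
  have hui : IsUniformInducing ((LinearMap.range Aφ).subtypeL) :=
    isUniformEmbedding_subtype_val.isUniformInducing
  set S : Dφ.K →L[ℂ] Dψ.K := S₁.extend (LinearMap.range Aφ).subtypeL with hS
  have hSA : ∀ f : G →₀ H, S (Aφ f) = Aψ f := by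
    intro f
    have : Aφ f = (LinearMap.range Aφ).subtypeL ⟨Aφ f, ⟨f, rfl⟩⟩ := rfl
    rw [this, hS, ContinuousLinearMap.extend_eq (h_dense := hdr) (h_e := hui), hS₁, LinearMap.mkContinuous_apply,
      hS₀val f ⟨f, rfl⟩]
  have hgen : ∀ (g : G) (ξ : H), S (Dφ.rep g (Dφ.V ξ)) = Dψ.rep g (Dψ.V ξ) := by
    intro g ξ
    have h1 : Dφ.rep g (Dφ.V ξ) = Aφ (Finsupp.single g ξ) := by
      rw [hAφ, Finsupp.lsum_single]; rfl
    have h2 : Dψ.rep g (Dψ.V ξ) = Aψ (Finsupp.single g ξ) := by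
      rw [hAψ, Finsupp.lsum_single]; rfl
    rw [h1, h2, hSA]
  -- norm bound everywhere
  have hbd : ∀ y : Dφ.K, ‖S y‖ ≤ Real.sqrt l * ‖y‖ := by
    intro y
    have hc : IsClosed {y : Dφ.K | ‖S y‖ ≤ Real.sqrt l * ‖y‖} :=
      isClosed_le (continuous_norm.comp S.continuous) (continuous_const.mul continuous_norm)
    have hsub : ((LinearMap.range Aφ : Submodule ℂ Dφ.K) : Set Dφ.K)
        ⊆ {y : Dφ.K | ‖S y‖ ≤ Real.sqrt l * ‖y‖} := by
      rintro x ⟨f, rfl⟩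
      simp only [Set.mem_setOf_eq]
      rw [hSA f]
      exact key f
    have := hc.closure_subset_iff.mpr hsub
    rw [hdense.closure_eq] at this
    exact this (Set.mem_univ y)
  have hnorm : ‖S‖ ^ 2 ≤ l := by
    have h1 : ‖S‖ ≤ Real.sqrt l := S.opNorm_le_bound (Real.sqrt_nonneg l) hbd
    calc ‖S‖ ^ 2 ≤ Real.sqrt l ^ 2 := pow_le_pow_left₀ (norm_nonneg S) h1 2
      _ = l := Real.sq_sqrt hl.le
  -- dense span for ext_on
  have hdspan : Dense ((Submodule.span ℂ {x : Dφ.K | ∃ g ξ, x = Dφ.rep g (Dφ.V ξ)}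
      : Submodule ℂ Dφ.K) : Set Dφ.K) :=
    Submodule.dense_iff_topologicalClosure_eq_top.mpr Dφ.minimal
  refine ⟨S, hnorm, hgen, ?_, ?_, ?_⟩
  · intro g
    refine ContinuousLinearMap.ext_on hdspan ?_
    rintro x ⟨g', ξ, rfl⟩
    simp only [ContinuousLinearMap.coe_comp', Function.comp_apply]
    have h1 : Dφ.rep g (Dφ.rep g' (Dφ.V ξ)) = Dφ.rep (g * g') (Dφ.V ξ) := by
      rw [Dφ.rep_mul]; rfl
    have h2 : Dψ.rep g (Dψ.rep g' (Dψ.V ξ)) = Dψ.rep (g * g') (Dψ.V ξ) := by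
      rw [Dψ.rep_mul]; rfl
    rw [h1, hgen, hgen, ← h2]
  · ext ξ
    simp only [ContinuousLinearMap.coe_comp', Function.comp_apply]
    have h1 : Dφ.V ξ = Dφ.rep 1 (Dφ.V ξ) := by rw [Dφ.rep_one]; rfl
    have h2 : Dψ.V ξ = Dψ.rep 1 (Dψ.V ξ) := by rw [Dψ.rep_one]; rfl
    rw [h1, hgen, ← h2]
  · refine ContinuousLinearMap.ext_on hdspan ?_
    rintro x ⟨g, ξ, rfl⟩
    simp only [ContinuousLinearMap.coe_comp', Function.comp_apply]
    have h1 : Dφ.J (Dφ.rep g (Dφ.V ξ)) = Dφ.rep (α g) (Dφ.V ξ) :=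
      congrArg (fun T : H →L[ℂ] Dφ.K => T ξ) (Dφ.commJ g)
    have h2 : Dψ.J (Dψ.rep g (Dψ.V ξ)) = Dψ.rep (α g) (Dψ.V ξ) :=
      congrArg (fun T : H →L[ℂ] Dψ.K => T ξ) (Dψ.commJ g)
    rw [h1, hgen, hgen, ← h2]
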